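/- Let 𝕋(7,4,2) be the group presented by generators c₁, c₂, c₃ subject to the relations c₁⁷ = c₂⁴ = c₃² = c₁c₂c₃ = 1. Then there exists a surjective group homomorphism φ : 𝕋(7,4,2) → PSL(2,7) such that orderOf φ(c₁) = 7, orderOf φ(c₂) = 4, and orderOf φ(c₃) = 2. -/

import Mathlib

/-- The relators of the polygonal group `𝕋(7,4,2)`:
`c₁⁷, c₂⁴, c₃², c₁c₂c₃`. -/
def rels742 : Set (FreeGroup (Fin 3)) :=
  {FreeGroup.of 0 ^ 7, FreeGroup.of 1 ^ 4, FreeGroup.of 2 ^ 2,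
    FreeGroup.of 0 * FreeGroup.of 1 * FreeGroup.of 2}

/-- The polygonal group `𝕋(7,4,2) = ⟨c₁,c₂,c₃ ∣ c₁⁷ = c₂⁴ = c₃² = c₁c₂c₃ = 1⟩`. -/
abbrev T742 : Type := PresentedGroup rels742

/-- `PSL(2,7)`: the quotient of `SL(2, ℤ/7ℤ)` by its center. -/
abbrev PSL27 :=
  Matrix.SpecialLinearGroup (Fin 2) (ZMod 7) ⧸
    Subgroup.center (Matrix.SpecialLinearGroup (Fin 2) (ZMod 7))

namespace Orb742
open Matrix

abbrev SL7 := Matrix.SpecialLinearGroup (Fin 2) (ZMod 7)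

instance : DecidableEq SL7 := fun a b =>
  decidable_of_iff (a.1 = b.1) (by exact Subtype.ext_iff.symm)

def A : SL7 := ⟨!![1,1;0,1], by decide⟩
def B : SL7 := ⟨!![0,5;4,3], by decide⟩
def S : SL7 := ⟨!![0,6;1,0], by decide⟩
def U (t : ZMod 7) : SL7 := ⟨!![1,t;0,1], by simp [Matrix.det_fin_two_of]⟩
def L (t : ZMod 7) : SL7 := ⟨!![1,0;t,1], by simp [Matrix.det_fin_two_of]⟩

lemma S_word : S = B*A*B*B*A*A*A*A*B := by decide
lemma U_pow : ∀ t : ZMod 7, U t = A ^ t.val := by decide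
def Sinv : SL7 := ⟨!![0,1;6,0], by decide⟩
lemma Sinv_word : Sinv = S * S * S := by decide
lemma L_eq : ∀ t : ZMod 7, L t = S * U (-t) * Sinv := by decide

def H : Subgroup SL7 := Subgroup.closure {A, B}

lemma hA : A ∈ H := Subgroup.subset_closure (by simp)
lemma hB : B ∈ H := Subgroup.subset_closure (by simp)
lemma hS : S ∈ H := by
  rw [S_word]
  exact mul_mem (mul_mem (mul_mem (mul_mem (mul_mem (mul_mem (mul_mem (mul_mem hB hA) hB) hB) hA) hA) hA) hA) hB
lemma hU (t : ZMod 7) : U t ∈ H := by rw [U_pow]; exact pow_mem hA _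
lemma hL (t : ZMod 7) : L t ∈ H := by
  rw [L_eq, Sinv_word]
  exact mul_mem (mul_mem hS (hU _)) (mul_mem (mul_mem hS hS) hS)

lemma decomp : ∀ a b c d e : ZMod 7, a*d - b*c = 1 → c * e = 1 →
    !![a,b;c,d] = !![1,(a-1)*e;(0:ZMod 7),1] * !![1,0;c,1] * !![1,(d-1)*e;0,1] := by
  decide

lemma mem_of_ne (M : SL7) (hc : (M : Matrix (Fin 2) (Fin 2) (ZMod 7)) 1 0 ≠ 0) : M ∈ H := by
  have hdet : (M : Matrix (Fin 2) (Fin 2) (ZMod 7)) 0 0 * (M : Matrix (Fin 2) (Fin 2) (ZMod 7)) 1 1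
      - (M : Matrix (Fin 2) (Fin 2) (ZMod 7)) 0 1 * (M : Matrix (Fin 2) (Fin 2) (ZMod 7)) 1 0 = 1 := by
    have h2 := M.2
    rwa [Matrix.det_fin_two] at h2
  haveI : Fact (Nat.Prime 7) := ⟨by norm_num⟩
  have hce : (M : Matrix (Fin 2) (Fin 2) (ZMod 7)) 1 0 * ((M : Matrix (Fin 2) (Fin 2) (ZMod 7)) 1 0)⁻¹ = 1 :=
    mul_inv_cancel₀ hc
  have key : M = U (((M : Matrix (Fin 2) (Fin 2) (ZMod 7)) 0 0 - 1) * ((M : Matrix (Fin 2) (Fin 2) (ZMod 7)) 1 0)⁻¹)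
      * L ((M : Matrix (Fin 2) (Fin 2) (ZMod 7)) 1 0)
      * U (((M : Matrix (Fin 2) (Fin 2) (ZMod 7)) 1 1 - 1) * ((M : Matrix (Fin 2) (Fin 2) (ZMod 7)) 1 0)⁻¹) := by
    apply Subtype.ext
    show (M : Matrix (Fin 2) (Fin 2) (ZMod 7)) = _
    rw [Matrix.SpecialLinearGroup.coe_mul, Matrix.SpecialLinearGroup.coe_mul]
    show _ = !![1,_;(0:ZMod 7),1] * !![1,0;_,1] * !![1,_;0,1]
    rw [Matrix.eta_fin_two (M : Matrix (Fin 2) (Fin 2) (ZMod 7))]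
    exact decomp _ _ _ _ _ hdet hce
  rw [key]
  exact mul_mem (mul_mem (hU _) (hL _)) (hU _)

lemma closure_eq_top : H = ⊤ := by
  rw [eq_top_iff]
  intro M _
  by_cases hc : (M : Matrix (Fin 2) (Fin 2) (ZMod 7)) 1 0 = 0
  · have ha : (M : Matrix (Fin 2) (Fin 2) (ZMod 7)) 0 0 ≠ 0 := by
      intro h0
      have h2 := M.2
      rw [Matrix.det_fin_two, hc, h0] at h2
      simp only [zero_mul, mul_zero, sub_zero, zero_sub, neg_zero] at h2
      exact absurd h2 (by decide)
    have hBM : (((B * M) : SL7) : Matrix (Fin 2) (Fin 2) (ZMod 7)) 1 0 ≠ 0 := by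
      rw [Matrix.SpecialLinearGroup.coe_mul, Matrix.mul_apply, Fin.sum_univ_two]
      show (4 : ZMod 7) * _ + (3 : ZMod 7) * _ ≠ 0
      rw [hc, mul_zero, add_zero]
      intro h
      apply ha
      have h2 : (2 : ZMod 7) * ((4 : ZMod 7) * (M : Matrix (Fin 2) (Fin 2) (ZMod 7)) 0 0) = 2 * 0 :=
        congrArg (fun z => (2 : ZMod 7) * z) h
      rwa [← mul_assoc, show ((2:ZMod 7) * 4) = 1 by decide, one_mul, mul_zero] at h2
    have := mem_of_ne (B * M) hBM
    have h2 : B⁻¹ * (B * M) ∈ H := mul_mem (inv_mem hB) this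
    rwa [inv_mul_cancel_left] at h2
  · exact mem_of_ne M hc

def pr : SL7 →* PSL27 := QuotientGroup.mk' _

lemma psl_closure_top : Subgroup.closure {pr A, pr B} = ⊤ := by
  have h1 : Subgroup.map pr H = Subgroup.closure (pr '' {A, B}) :=
    MonoidHom.map_closure pr {A, B}
  rw [Set.image_pair] at h1
  rw [← h1, closure_eq_top]
  exact Subgroup.map_top_of_surjective pr (QuotientGroup.mk'_surjective _)

-- relator facts
lemma A7 : A ^ 7 = 1 := by decide
lemma B4_center : B ^ 4 ∈ Subgroup.center SL7 := by
  rw [Matrix.SpecialLinearGroup.mem_center_iff]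
  exact ⟨-1, by decide, by decide⟩
lemma AB2_center : (A * B) ^ 2 ∈ Subgroup.center SL7 := by
  rw [Matrix.SpecialLinearGroup.mem_center_iff]
  exact ⟨-1, by decide, by decide⟩
lemma A_not_center : A ∉ Subgroup.center SL7 := by
  rw [Subgroup.mem_center_iff]
  intro h
  exact absurd (h B) (by decide)
lemma B2_not_center : B ^ 2 ∉ Subgroup.center SL7 := by
  rw [Subgroup.mem_center_iff]
  intro h
  exact absurd (h A) (by decide)
lemma AB_not_center : (A * B) ∉ Subgroup.center SL7 := by
  rw [Subgroup.mem_center_iff]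
  intro h
  exact absurd (h A) (by decide)

def f : Fin 3 → PSL27 := ![pr A, pr B, pr ((A * B)⁻¹)]

lemma hrels : ∀ r ∈ rels742, FreeGroup.lift f r = 1 := by
  intro r hr
  rcases hr with h | h | h | h
  · subst h
    rw [map_pow, FreeGroup.lift_apply_of]
    show (pr A) ^ 7 = 1
    rw [← map_pow, A7, _root_.map_one]
  · subst h
    rw [map_pow, FreeGroup.lift_apply_of]
    show (pr B) ^ 4 = 1
    rw [← map_pow]
    exact (QuotientGroup.eq_one_iff _).mpr B4_center
  · subst h
    rw [map_pow, FreeGroup.lift_apply_of]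
    show (pr ((A * B)⁻¹)) ^ 2 = 1
    rw [← map_pow, inv_pow]
    exact (QuotientGroup.eq_one_iff _).mpr (inv_mem AB2_center)
  · rw [Set.mem_singleton_iff] at h
    subst h
    rw [_root_.map_mul, _root_.map_mul, FreeGroup.lift_apply_of, FreeGroup.lift_apply_of, FreeGroup.lift_apply_of]
    show pr A * pr B * pr ((A * B)⁻¹) = 1
    rw [← _root_.map_mul, ← _root_.map_mul, mul_inv_cancel, _root_.map_one]

def φ : T742 →* PSL27 := PresentedGroup.toGroup hrels

lemma φ0 : φ (PresentedGroup.of 0) = pr A := PresentedGroup.toGroup.of hrels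
lemma φ1 : φ (PresentedGroup.of 1) = pr B := PresentedGroup.toGroup.of hrels
lemma φ2 : φ (PresentedGroup.of 2) = pr ((A * B)⁻¹) := PresentedGroup.toGroup.of hrels

lemma φ_surj : Function.Surjective φ := by
  rw [← MonoidHom.range_eq_top, eq_top_iff, ← psl_closure_top]
  rw [Subgroup.closure_le]
  rintro x (h | h)
  · exact ⟨PresentedGroup.of 0, by rw [φ0, h]⟩
  · rw [Set.mem_singleton_iff] at h
    exact ⟨PresentedGroup.of 1, by rw [φ1, h]⟩

lemma ordA : orderOf (pr A) = 7 := by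
  have h7 : (pr A) ^ 7 = 1 := by rw [← map_pow, A7, _root_.map_one]
  haveI : Fact (Nat.Prime 7) := ⟨by norm_num⟩
  refine orderOf_eq_prime h7 ?_
  intro h
  exact A_not_center ((QuotientGroup.eq_one_iff _).mp h)

lemma ordB : orderOf (pr B) = 4 := by
  have h4 : (pr B) ^ 4 = 1 := by
    rw [← map_pow]; exact (QuotientGroup.eq_one_iff _).mpr B4_center
  have h2 : (pr B) ^ 2 ≠ 1 := by
    rw [← map_pow]
    intro h
    exact B2_not_center ((QuotientGroup.eq_one_iff _).mp h)
  rw [orderOf_eq_iff (by norm_num)]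
  refine ⟨h4, ?_⟩
  intro m hm hm0 h1
  have hBne : pr B ≠ 1 := fun h => h2 (by rw [h, one_pow])
  interval_cases m
  · exact hBne (by rwa [pow_one] at h1)
  · exact h2 h1
  · apply hBne
    have h5 := h4
    rw [show (4:ℕ) = 3 + 1 by norm_num, pow_add, h1, one_mul, pow_one] at h5
    exact h5

lemma ordAB : orderOf (pr ((A * B)⁻¹)) = 2 := by
  have h2 : (pr ((A * B)⁻¹)) ^ 2 = 1 := by
    rw [← map_pow, inv_pow]
    exact (QuotientGroup.eq_one_iff _).mpr (inv_mem AB2_center)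
  haveI : Fact (Nat.Prime 2) := ⟨by norm_num⟩
  refine orderOf_eq_prime h2 ?_
  intro h
  apply AB_not_center
  have h3 := (QuotientGroup.eq_one_iff _).mp h
  simpa using inv_mem h3

end Orb742

/-- There is a surjective homomorphism `𝕋(7,4,2) → PSL(2,7)` sending the
generators `c₁, c₂, c₃` to elements of orders exactly `7, 4, 2`
(an appropriate orbifold homomorphism). -/
theorem exists_appropriate_orbifold_hom_742 :
    ∃ φ : T742 →* PSL27, Function.Surjective φ ∧
      orderOf (φ (PresentedGroup.of 0)) = 7 ∧
      orderOf (φ (PresentedGroup.of 1)) = 4 ∧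
      orderOf (φ (PresentedGroup.of 2)) = 2 := by
  exact ⟨Orb742.φ, Orb742.φ_surj,
    by rw [Orb742.φ0]; exact Orb742.ordA,
    by rw [Orb742.φ1]; exact Orb742.ordB,
    by rw [Orb742.φ2]; exact Orb742.ordAB⟩
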